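/- Fix an integer N ≥ 2 and real numbers η₁, …, η_{N−1}, η₀ = 0. Let θ = (θ₀, …, θ_{N−1}) : (0,1) → ℝ^N be differentiable and set θ_N := 0 and θ_{−1}(ξ) := ξ·θ₁(ξ). Then the three-term differential recurrence 2ξ(ξ−1)θ_i'(ξ) − (η_i + i + (η_i − i − 6)ξ)θ_i(ξ) + ξ(η_i + i − 2)θ_{i+1}(ξ) + (η_i − i − 2)θ_{i−1}(ξ) = 0 holds for all 0 ≤ i ≤ N−1 and ξ ∈ (0,1) if and only if θ satisfies the Fuchsian system θ'(ξ) = Aθ(ξ)/ξ − Bθ(ξ)/(ξ−1) on (0,1), where A is the N×N lower bidiagonal matrix with A_{0,0} = 0, A_{i,i} = −(η_i + i)/2 and A_{i,i−1} = (η_i − i − 2)/2 for 1 ≤ i ≤ N−1, and B is as defined below. -/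
import Mathlib


open Polynomial

/-- The `N×N` tridiagonal residue matrix at `ξ = 1` for the unbounded whole-plane LLE
at `q = 2` (truncation `η_N = N + 2`): `B₀₀ = 3`, `B₀₁ = -2`, and for `1 ≤ i ≤ N-1`:
`B_{i,i-1} = (η_i - i - 2)/2`, `B_{i,i} = 3 - η_i`, `B_{i,i+1} = (η_i + i - 2)/2`. -/
noncomputable def unboundedB (N : ℕ) (η : ℕ → ℝ) : Matrix (Fin N) (Fin N) ℝ :=
  Matrix.of fun i j =>
    if (i : ℕ) = 0 then
      (if (j : ℕ) = 0 then 3 else if (j : ℕ) = 1 then -2 else 0)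
    else if (j : ℕ) + 1 = (i : ℕ) then (η i - i - 2) / 2
    else if (j : ℕ) = (i : ℕ) then 3 - η i
    else if (j : ℕ) = (i : ℕ) + 1 then (η i + i - 2) / 2
    else 0

/-- The `N×N` lower-bidiagonal residue matrix at `ξ = 0` for the unbounded
whole-plane LLE at `q = 2`: `A₀₀ = 0`, `A_{i,i} = -(η_i + i)/2` and
`A_{i,i-1} = (η_i - i - 2)/2` for `1 ≤ i ≤ N-1`. -/
noncomputable def unboundedA (N : ℕ) (η : ℕ → ℝ) : Matrix (Fin N) (Fin N) ℝ :=
  Matrix.of fun i j =>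
    if (i : ℕ) = 0 then 0
    else if (j : ℕ) = (i : ℕ) then -(η i + i) / 2
    else if (j : ℕ) + 1 = (i : ℕ) then (η i - i - 2) / 2
    else 0

/-- Extension of the family `θ₀, …, θ_{N-1}` by `θ_N := 0` (and `0` beyond) and
`θ_{-1}(ξ) := ξ · θ₁(ξ)`, as used in the unbounded three-term recurrence. -/
noncomputable def unboundedThetaExt (N : ℕ) (θ : ℕ → ℝ → ℝ) : ℤ → ℝ → ℝ :=
  fun i ξ =>
    if i = -1 then ξ * θ 1 ξ
    else if 0 ≤ i ∧ i < (N : ℤ) then θ i.toNat ξ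
    else 0

/-- For `N ≥ 2` and `η₀ = 0`, a differentiable family
`θ = (θ₀, …, θ_{N-1})` on `(0,1)` satisfies the three-term differential recurrence
`2ξ(ξ-1)θ_i' - (η_i + i + (η_i - i - 6)ξ)θ_i + ξ(η_i + i - 2)θ_{i+1} + (η_i - i - 2)θ_{i-1} = 0`
for `0 ≤ i ≤ N-1` (with `θ_N := 0`, `θ_{-1}(ξ) := ξθ₁(ξ)`) if and only if `θ`
satisfies the Fuchsian system `θ' = Aθ/ξ - Bθ/(ξ-1)` on `(0,1)`. -/
theorem unbounded_recurrence_iff_fuchsian (N : ℕ) (hN : 2 ≤ N)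
    (η : ℕ → ℝ) (hη₀ : η 0 = 0)
    (θ : ℕ → ℝ → ℝ)
    (hθ : ∀ i : ℕ, i < N → ∀ ξ ∈ Set.Ioo (0 : ℝ) 1, DifferentiableAt ℝ (θ i) ξ) :
    (∀ i : ℕ, i < N → ∀ ξ ∈ Set.Ioo (0 : ℝ) 1,
        2 * ξ * (ξ - 1) * deriv (θ i) ξ
          - (η i + i + (η i - i - 6) * ξ) * θ i ξ
          + ξ * (η i + i - 2) * unboundedThetaExt N θ ((i : ℤ) + 1) ξ
          + (η i - i - 2) * unboundedThetaExt N θ ((i : ℤ) - 1) ξ = 0)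
    ↔
    (∀ i : Fin N, ∀ ξ ∈ Set.Ioo (0 : ℝ) 1,
        deriv (θ i) ξ =
          (∑ j : Fin N, unboundedA N η i j * θ j ξ) / ξ
            - (∑ j : Fin N, unboundedB N η i j * θ j ξ) / (ξ - 1)) := by
  have key : ∀ i : Fin N, ∀ ξ ∈ Set.Ioo (0 : ℝ) 1,
      (2 * ξ * (ξ - 1) * deriv (θ (i : ℕ)) ξ
          - (η (i : ℕ) + ((i : ℕ) : ℝ) + (η (i : ℕ) - ((i : ℕ) : ℝ) - 6) * ξ) * θ (i : ℕ) ξ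
          + ξ * (η (i : ℕ) + ((i : ℕ) : ℝ) - 2) * unboundedThetaExt N θ (((i : ℕ) : ℤ) + 1) ξ
          + (η (i : ℕ) - ((i : ℕ) : ℝ) - 2) * unboundedThetaExt N θ (((i : ℕ) : ℤ) - 1) ξ = 0)
        ↔ (deriv (θ i) ξ =
          (∑ j : Fin N, unboundedA N η i j * θ j ξ) / ξ
            - (∑ j : Fin N, unboundedB N η i j * θ j ξ) / (ξ - 1)) := by
    intro i ξ hξ
    obtain ⟨hξ0, hξ1⟩ := hξ
    have hx : ξ ≠ 0 := ne_of_gt hξ0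
    have hx1 : ξ - 1 ≠ 0 := sub_ne_zero.mpr (ne_of_lt hξ1)
    rcases Nat.eq_zero_or_pos (i : ℕ) with hi0 | hi1
    · -- row i = 0
      have h1N : (1 : ℕ) < N := by omega
      have h0N : (0 : ℕ) < N := by omega
      have hSA : (∑ j : Fin N, unboundedA N η i j * θ j ξ) = 0 := by
        simp [unboundedA, hi0]
      have hext1 : unboundedThetaExt N θ (((i : ℕ) : ℤ) + 1) ξ = θ 1 ξ := by
        rw [unboundedThetaExt]
        rw [if_neg (by omega), if_pos (by constructor <;> omega)]
        have ht : (((i : ℕ) : ℤ) + 1).toNat = 1 := by omega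
        rw [ht]
      have hext2 : unboundedThetaExt N θ (((i : ℕ) : ℤ) - 1) ξ = ξ * θ 1 ξ := by
        rw [unboundedThetaExt]
        rw [if_pos (by omega)]
      have v0 : unboundedB N η i ⟨0, h0N⟩ = 3 := by
        simp only [unboundedB, Matrix.of_apply, Fin.val_mk]
        rw [if_pos hi0]
        norm_num
      have v1 : unboundedB N η i ⟨1, h1N⟩ = -2 := by
        simp only [unboundedB, Matrix.of_apply, Fin.val_mk]
        rw [if_pos hi0]
        norm_num
      have hSB : (∑ j : Fin N, unboundedB N η i j * θ j ξ)
          = 3 * θ 0 ξ + (-2) * θ 1 ξ := by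
        rw [← Finset.sum_subset
            (Finset.subset_univ ({⟨0, h0N⟩, ⟨1, h1N⟩} : Finset (Fin N)))
            (fun j _ hj => ?_)]
        · rw [Finset.sum_pair (by simp [Fin.ext_iff]), v0, v1]
        · simp only [Finset.mem_insert, Finset.mem_singleton] at hj
          push_neg at hj
          have c0 : (j : ℕ) ≠ 0 := fun h => hj.1 (Fin.ext h)
          have c1 : (j : ℕ) ≠ 1 := fun h => hj.2 (Fin.ext h)
          simp only [unboundedB, Matrix.of_apply]
          rw [if_pos hi0, if_neg c0, if_neg c1, zero_mul]
      rw [hSA, hSB, hext1, hext2, div_sub_div _ _ hx hx1,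
        eq_div_iff (mul_ne_zero hx hx1), hi0, hη₀]
      constructor
      · intro h
        linear_combination h / 2
      · intro h
        linear_combination 2 * h
    · -- rows i ≥ 1
      have hiN : (i : ℕ) < N := i.isLt
      have hkN : (i : ℕ) - 1 < N := by omega
      have hip : (⟨(i : ℕ) - 1, hkN⟩ : Fin N) ≠ i := by
        intro h
        have := congrArg Fin.val h
        simp only [Fin.val_mk] at this
        omega
      have hc0 : ¬ ((i : ℕ) = 0) := by omega
      have hext2 : unboundedThetaExt N θ (((i : ℕ) : ℤ) - 1) ξ = θ ((i : ℕ) - 1) ξ := by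
        rw [unboundedThetaExt]
        rw [if_neg (by omega), if_pos (by constructor <;> omega)]
        have ht : (((i : ℕ) : ℤ) - 1).toNat = (i : ℕ) - 1 := by omega
        rw [ht]
      have vAp : unboundedA N η i ⟨(i : ℕ) - 1, hkN⟩ = (η (i : ℕ) - ((i : ℕ) : ℝ) - 2) / 2 := by
        simp only [unboundedA, Matrix.of_apply, Fin.val_mk]
        rw [if_neg hc0, if_neg (by omega : ¬ ((i : ℕ) - 1 = (i : ℕ))),
          if_pos (by omega : (i : ℕ) - 1 + 1 = (i : ℕ))]
      have vAd : unboundedA N η i i = -(η (i : ℕ) + ((i : ℕ) : ℝ)) / 2 := by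
        simp only [unboundedA, Matrix.of_apply]
        rw [if_neg hc0]
        simp
      have hSA : (∑ j : Fin N, unboundedA N η i j * θ j ξ)
          = (η (i : ℕ) - ((i : ℕ) : ℝ) - 2) / 2 * θ ((i : ℕ) - 1) ξ
            + (-(η (i : ℕ) + ((i : ℕ) : ℝ)) / 2) * θ (i : ℕ) ξ := by
        rw [← Finset.sum_subset
            (Finset.subset_univ ({(⟨(i : ℕ) - 1, hkN⟩ : Fin N), i} : Finset (Fin N)))
            (fun j _ hj => ?_)]
        · rw [Finset.sum_pair hip, vAp, vAd]
        · simp only [Finset.mem_insert, Finset.mem_singleton] at hj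
          push_neg at hj
          have c1 : (j : ℕ) ≠ (i : ℕ) - 1 := fun h => hj.1 (Fin.ext h)
          have c2' : (j : ℕ) ≠ (i : ℕ) := fun h => hj.2 (Fin.ext h)
          simp only [unboundedA, Matrix.of_apply]
          rw [if_neg hc0, if_neg c2', if_neg (by omega), zero_mul]
      have vBp : unboundedB N η i ⟨(i : ℕ) - 1, hkN⟩ = (η (i : ℕ) - ((i : ℕ) : ℝ) - 2) / 2 := by
        simp only [unboundedB, Matrix.of_apply, Fin.val_mk]
        rw [if_neg hc0, if_pos (by omega : (i : ℕ) - 1 + 1 = (i : ℕ))]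
      have vBd : unboundedB N η i i = 3 - η (i : ℕ) := by
        simp only [unboundedB, Matrix.of_apply]
        rw [if_neg hc0, if_neg (by omega : ¬ ((i : ℕ) + 1 = (i : ℕ)))]
        simp
      by_cases hlt : (i : ℕ) + 1 < N
      · have hext1 : unboundedThetaExt N θ (((i : ℕ) : ℤ) + 1) ξ = θ ((i : ℕ) + 1) ξ := by
          rw [unboundedThetaExt]
          rw [if_neg (by omega), if_pos (by constructor <;> omega)]
          have ht : (((i : ℕ) : ℤ) + 1).toNat = (i : ℕ) + 1 := by omega
          rw [ht]
        have hnx : (⟨(i : ℕ) + 1, hlt⟩ : Fin N) ≠ i := by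
          intro h
          have := congrArg Fin.val h
          simp only [Fin.val_mk] at this
          omega
        have hnxp : (⟨(i : ℕ) - 1, hkN⟩ : Fin N) ≠ (⟨(i : ℕ) + 1, hlt⟩ : Fin N) := by
          intro h
          have := congrArg Fin.val h
          simp only [Fin.val_mk] at this
          omega
        have vBn : unboundedB N η i ⟨(i : ℕ) + 1, hlt⟩
            = (η (i : ℕ) + ((i : ℕ) : ℝ) - 2) / 2 := by
          simp only [unboundedB, Matrix.of_apply, Fin.val_mk]
          rw [if_neg hc0, if_neg (by omega : ¬ ((i : ℕ) + 1 + 1 = (i : ℕ))),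
            if_neg (by omega : ¬ ((i : ℕ) + 1 = (i : ℕ)))]
          simp
        have hSB : (∑ j : Fin N, unboundedB N η i j * θ j ξ)
            = (η (i : ℕ) - ((i : ℕ) : ℝ) - 2) / 2 * θ ((i : ℕ) - 1) ξ
              + (η (i : ℕ) + ((i : ℕ) : ℝ) - 2) / 2 * θ ((i : ℕ) + 1) ξ
              + (3 - η (i : ℕ)) * θ (i : ℕ) ξ := by
          rw [← Finset.sum_subset
              (Finset.subset_univ
                ({(⟨(i : ℕ) - 1, hkN⟩ : Fin N), (⟨(i : ℕ) + 1, hlt⟩ : Fin N), i} :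
                  Finset (Fin N)))
              (fun j _ hj => ?_)]
          · rw [Finset.sum_insert (by
                simp only [Finset.mem_insert, Finset.mem_singleton]
                push_neg
                exact ⟨hnxp, hip⟩),
              Finset.sum_pair hnx, vBp, vBn, vBd]
            ring
          · simp only [Finset.mem_insert, Finset.mem_singleton] at hj
            push_neg at hj
            have c1 : (j : ℕ) ≠ (i : ℕ) - 1 := fun h => hj.1 (Fin.ext h)
            have c3 : (j : ℕ) ≠ (i : ℕ) + 1 := fun h => hj.2.1 (Fin.ext h)
            have c2' : (j : ℕ) ≠ (i : ℕ) := fun h => hj.2.2 (Fin.ext h)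
            simp only [unboundedB, Matrix.of_apply]
            rw [if_neg hc0, if_neg (by omega), if_neg c2', if_neg c3, zero_mul]
        rw [hSA, hSB, hext1, hext2, div_sub_div _ _ hx hx1,
          eq_div_iff (mul_ne_zero hx hx1)]
        constructor
        · intro h; linear_combination h / 2
        · intro h; linear_combination 2 * h
      · have hext1 : unboundedThetaExt N θ (((i : ℕ) : ℤ) + 1) ξ = 0 := by
          rw [unboundedThetaExt]
          rw [if_neg (by omega), if_neg (by omega)]
        have hSB : (∑ j : Fin N, unboundedB N η i j * θ j ξ)
            = (η (i : ℕ) - ((i : ℕ) : ℝ) - 2) / 2 * θ ((i : ℕ) - 1) ξ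
              + (3 - η (i : ℕ)) * θ (i : ℕ) ξ := by
          rw [← Finset.sum_subset
              (Finset.subset_univ ({(⟨(i : ℕ) - 1, hkN⟩ : Fin N), i} : Finset (Fin N)))
              (fun j _ hj => ?_)]
          · rw [Finset.sum_pair hip, vBp, vBd]
          · simp only [Finset.mem_insert, Finset.mem_singleton] at hj
            push_neg at hj
            have c1 : (j : ℕ) ≠ (i : ℕ) - 1 := fun h => hj.1 (Fin.ext h)
            have c2' : (j : ℕ) ≠ (i : ℕ) := fun h => hj.2 (Fin.ext h)
            have c3 : (j : ℕ) ≠ (i : ℕ) + 1 := by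
              intro h
              have := j.isLt
              omega
            simp only [unboundedB, Matrix.of_apply]
            rw [if_neg hc0, if_neg (by omega), if_neg c2', if_neg c3, zero_mul]
        rw [hSA, hSB, hext1, hext2, div_sub_div _ _ hx hx1,
          eq_div_iff (mul_ne_zero hx hx1)]
        constructor
        · intro h; linear_combination h / 2
        · intro h; linear_combination 2 * h
  constructor
  · intro h i ξ hξ
    exact (key i ξ hξ).mp (h i i.isLt ξ hξ)
  · intro h i hi ξ hξ
    exact (key ⟨i, hi⟩ ξ hξ).mpr (h ⟨i, hi⟩ ξ hξ)
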